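/- Let Q ≥ 2, let π_1,…,π_Q ∈ (0,1) with Σ_q π_q = 1, set s_k = Σ_{q=1}^Q π_q^k, let α, β ∈ [0,1] with α ≠ β, and define m_1 = s_2 α + (1−s_2) β, m_2 = s_3 α² + 2(s_2−s_3) α β + (1−2 s_2+s_3) β², m_3 = s_3 α³ + 3(s_2−s_3) α β² + (1−3 s_2+2 s_3) β³. If m_2 = m_1², then π is uniform (π_q = 1/Q for all q), and the parameters are recovered by (β − m_1)³ = (m_1³ − m_3)/(Q − 1) (so β = m_1 + ((m_1³−m_3)/(Q−1))^{1/3} with the real cube root) and α = Q m_1 + (1 − Q) β. -/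

import Mathlib

open Finset

/-- For the binary affiliation model with `Q` groups and `α ≠ β`: if `m₂ = m₁²` then the
group proportions are uniform and the parameters are recovered by
`(β - m₁)³ = (m₁³ - m₃)/(Q - 1)` and `α = Q m₁ + (1 - Q) β`. -/
theorem affiliation_uniform_recovery
    (Q : ℕ) (hQ : 2 ≤ Q) (π : Fin Q → ℝ)
    (hπ : ∀ q, π q ∈ Set.Ioo (0 : ℝ) 1) (hπsum : ∑ q, π q = 1)
    (α β : ℝ) (hα : α ∈ Set.Icc (0 : ℝ) 1) (hβ : β ∈ Set.Icc (0 : ℝ) 1)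
    (hαβ : α ≠ β)
    (s₂ s₃ m₁ m₂ m₃ : ℝ)
    (hs₂ : s₂ = ∑ q, π q ^ 2) (hs₃ : s₃ = ∑ q, π q ^ 3)
    (hm₁ : m₁ = s₂ * α + (1 - s₂) * β)
    (hm₂ : m₂ = s₃ * α ^ 2 + 2 * (s₂ - s₃) * α * β + (1 - 2 * s₂ + s₃) * β ^ 2)
    (hm₃ : m₃ = s₃ * α ^ 3 + 3 * (s₂ - s₃) * α * β ^ 2 + (1 - 3 * s₂ + 2 * s₃) * β ^ 3)
    (heq : m₂ = m₁ ^ 2) :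
    (∀ q, π q = 1 / (Q : ℝ)) ∧
    (β - m₁) ^ 3 = (m₁ ^ 3 - m₃) / ((Q : ℝ) - 1) ∧
    α = (Q : ℝ) * m₁ + (1 - (Q : ℝ)) * β := by
  have hQ0 : (Q : ℝ) ≠ 0 := by positivity
  have hQ1 : (Q : ℝ) - 1 ≠ 0 := by
    have : (2 : ℝ) ≤ (Q : ℝ) := by exact_mod_cast hQ
    linarith
  -- Step 1: s₃ = s₂²
  have hkey : (s₃ - s₂ ^ 2) * (α - β) ^ 2 = 0 := by
    rw [hm₂, hm₁] at heq; linear_combination heq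
  have hab : (α - β) ^ 2 ≠ 0 := pow_ne_zero _ (sub_ne_zero.mpr hαβ)
  have hs : s₃ = s₂ ^ 2 := by
    rcases mul_eq_zero.mp hkey with h | h
    · linarith
    · exact absurd h hab
  -- Step 2: the variance identity
  have expand : ∑ q, ∑ r, π q * π r * (π q - π r) ^ 2 = 2 * (s₃ - s₂ ^ 2) := by
    have h1 : ∀ q : Fin Q, ∑ r, π q * π r * (π q - π r) ^ 2
        = π q ^ 3 * (∑ r, π r) - 2 * π q ^ 2 * (∑ r, π r ^ 2) + π q * (∑ r, π r ^ 3) := by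
      intro q
      rw [Finset.mul_sum, Finset.mul_sum, Finset.mul_sum]
      rw [← Finset.sum_sub_distrib, ← Finset.sum_add_distrib]
      exact Finset.sum_congr rfl fun r _ => by ring
    calc ∑ q, ∑ r, π q * π r * (π q - π r) ^ 2
        = ∑ q, (π q ^ 3 * (∑ r, π r) - 2 * π q ^ 2 * (∑ r, π r ^ 2)
            + π q * (∑ r, π r ^ 3)) := Finset.sum_congr rfl fun q _ => h1 q
      _ = 2 * (s₃ - s₂ ^ 2) := by
          rw [Finset.sum_add_distrib, Finset.sum_sub_distrib, ← Finset.sum_mul,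
            ← Finset.sum_mul, ← Finset.sum_mul, ← Finset.mul_sum, hπsum, ← hs₂, ← hs₃]
          ring
  have hzero : ∑ q, ∑ r, π q * π r * (π q - π r) ^ 2 = 0 := by
    rw [expand, hs]; ring
  have hnn : ∀ q ∈ Finset.univ (α := Fin Q), ∀ r ∈ Finset.univ (α := Fin Q),
      0 ≤ π q * π r * (π q - π r) ^ 2 := by
    intro q _ r _
    have h1 := (hπ q).1
    have h2 := (hπ r).1
    positivity
  have heqqr : ∀ q r : Fin Q, π q = π r := by
    intro q r
    have hin : ∀ q ∈ Finset.univ (α := Fin Q),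
        0 ≤ ∑ r, π q * π r * (π q - π r) ^ 2 := fun q hq =>
      Finset.sum_nonneg (fun r hr => hnn q hq r hr)
    have h0 : ∑ r', π q * π r' * (π q - π r') ^ 2 = 0 :=
      (Finset.sum_eq_zero_iff_of_nonneg hin).mp hzero q (Finset.mem_univ q)
    have h0' : π q * π r * (π q - π r) ^ 2 = 0 :=
      (Finset.sum_eq_zero_iff_of_nonneg (fun r' hr' => hnn q (Finset.mem_univ q) r' hr')).mp
        h0 r (Finset.mem_univ r)
    have h1 := (hπ q).1
    have h2 := (hπ r).1
    rcases mul_eq_zero.mp h0' with h | h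
    · rcases mul_eq_zero.mp h with h | h <;> linarith
    · have := pow_eq_zero_iff (n := 2) (by norm_num) |>.mp h
      linarith
  have huniform : ∀ q, π q = 1 / (Q : ℝ) := by
    intro q
    have hsum : ∑ r, π r = ∑ r : Fin Q, π q :=
      Finset.sum_congr rfl fun r _ => (heqqr r q)
    rw [Finset.sum_const, Finset.card_univ, Fintype.card_fin, nsmul_eq_mul] at hsum
    rw [hπsum] at hsum
    field_simp
    linarith [hsum]
  -- Step 3: compute s₂ and s₃
  have hs2v : s₂ = 1 / (Q : ℝ) := by
    rw [hs₂]
    rw [Finset.sum_congr rfl fun q _ => by rw [huniform q]]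
    rw [Finset.sum_const, Finset.card_univ, Fintype.card_fin, nsmul_eq_mul]
    field_simp
  have hs3v : s₃ = 1 / (Q : ℝ) ^ 2 := by
    rw [hs, hs2v]; ring
  refine ⟨huniform, ?_, ?_⟩
  · rw [hm₃, hm₁, hs2v, hs3v]
    field_simp
    ring
  · rw [hm₁, hs2v]
    field_simp
    ring
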